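/- arXiv:1812.07064 — 5 statements merged into one kernel-verified Lean document; each statement's English description precedes it below -/
import Mathlib

section
/- For all real numbers a, b > 0, the inequality (a - b)(log a - log b) ≥ 4(√a - √b)² holds. -/
lemma key_log_ineq (t : ℝ) (ht : 1 ≤ t) : 2 * (t - 1) ≤ (t + 1) * Real.log t := by
  set f : ℝ → ℝ := fun x => (x + 1) * Real.log x - 2 * (x - 1) with hf
  have hderiv : ∀ x ∈ Set.Ioi (1:ℝ), HasDerivAt f (Real.log x + (x+1) * x⁻¹ - 2) x := by
    intro x hx
    have hx0 : x ≠ 0 := by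
      have : (1:ℝ) < x := hx
      linarith
    have h1 : HasDerivAt (fun x : ℝ => (x + 1) * Real.log x)
        (1 * Real.log x + (x + 1) * x⁻¹) x :=
      ((hasDerivAt_id x).add_const 1).mul (Real.hasDerivAt_log hx0)
    have h2 : HasDerivAt (fun x : ℝ => 2 * (x - 1)) 2 x := by
      simpa using ((hasDerivAt_id x).sub_const 1).const_mul 2
    have h3 := h1.sub h2
    rw [one_mul] at h3
    exact h3
  have hmono : MonotoneOn f (Set.Ici (1:ℝ)) := by
    apply monotoneOn_of_deriv_nonneg (convex_Ici 1)
    · apply ContinuousOn.sub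
      · apply ContinuousOn.mul (by fun_prop)
        apply Real.continuousOn_log.mono
        intro x hx
        simp only [Set.mem_Ici] at hx
        simp; linarith
      · fun_prop
    · intro x hx
      rw [interior_Ici] at hx
      exact (hderiv x hx).differentiableAt.differentiableWithinAt
    · intro x hx
      rw [interior_Ici] at hx
      rw [(hderiv x hx).deriv]
      have hx1 : (1:ℝ) < x := hx
      have hx0 : 0 < x := by linarith
      have hlog : 1 - x⁻¹ ≤ Real.log x := by
        have := Real.log_le_sub_one_of_pos (x := x⁻¹) (by positivity)
        rw [Real.log_inv] at this
        linarith
      have hxe : (x+1) * x⁻¹ = 1 + x⁻¹ := by field_simp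
      rw [hxe]; linarith
  have h1 : f 1 ≤ f t := hmono (by simp) (by simpa using ht) ht
  simp only [hf, Real.log_one] at h1
  linarith

lemma log_mean_aux (a b : ℝ) (ha : 0 < a) (hb : 0 < b) (hba : b ≤ a) :
    (a - b) * (Real.log a - Real.log b) ≥ 4 * (Real.sqrt a - Real.sqrt b) ^ 2 := by
  set u := Real.sqrt a with hu
  set v := Real.sqrt b with hv
  have hu0 : 0 < u := Real.sqrt_pos.2 ha
  have hv0 : 0 < v := Real.sqrt_pos.2 hb
  have hvu : v ≤ u := Real.sqrt_le_sqrt hba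
  have hua : u ^ 2 = a := Real.sq_sqrt ha.le
  have hvb : v ^ 2 = b := Real.sq_sqrt hb.le
  have hloga : Real.log a = 2 * Real.log u := by
    rw [← hua, Real.log_pow]; push_cast; ring
  have hlogb : Real.log b = 2 * Real.log v := by
    rw [← hvb, Real.log_pow]; push_cast; ring
  -- key in homogeneous form
  have ht : 1 ≤ u / v := (one_le_div hv0).2 hvu
  have hk := key_log_ineq (u / v) ht
  have hlogd : Real.log (u / v) = Real.log u - Real.log v :=
    Real.log_div hu0.ne' hv0.ne'
  rw [hlogd] at hk
  have hk' : 2 * (u - v) ≤ (u + v) * (Real.log u - Real.log v) := by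
    have h := mul_le_mul_of_nonneg_left hk hv0.le
    have e1 : v * (2 * (u / v - 1)) = 2 * (u - v) := by field_simp
    have e2 : v * ((u / v + 1) * (Real.log u - Real.log v))
        = (u + v) * (Real.log u - Real.log v) := by field_simp
    rw [e1, e2] at h
    exact h
  have huv : 0 ≤ u - v := by linarith
  rw [hloga, hlogb, ← hua, ← hvb]
  nlinarith [mul_le_mul_of_nonneg_left hk' huv]

theorem log_mean_sqrt_ineq (a b : ℝ) (ha : 0 < a) (hb : 0 < b) :
    (a - b) * (Real.log a - Real.log b) ≥ 4 * (Real.sqrt a - Real.sqrt b) ^ 2 := by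
  rcases le_total b a with h | h
  · exact log_mean_aux a b ha hb h
  · have := log_mean_aux b a hb ha h
    nlinarith [this]
end

section
/- Define φ(x,y) = (x(log x − log y) − (x − y)) / (√x − √y)² for x, y > 0, x ≠ y, and φ(y,y) = 2. Then for each fixed x > 0, the function y ↦ φ(x,y) is strictly decreasing on (0,∞). -/
noncomputable def phi (x y : ℝ) : ℝ :=
  if x = y then 2
  else (x * (Real.log x - Real.log y) - (x - y)) / (Real.sqrt x - Real.sqrt y) ^ 2

open Real Set

/-- Auxiliary function: phi in terms of `t = sqrt (y/x)`. -/
noncomputable def gfun (t : ℝ) : ℝ :=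
  if t = 1 then 2 else (t ^ 2 - 1 - 2 * Real.log t) / (t - 1) ^ 2

lemma hfun_hasDeriv {t : ℝ} (ht : 0 < t) :
    HasDerivAt (fun s : ℝ => 1 / s - s + 2 * Real.log s)
      (-(t - 1) ^ 2 / t ^ 2) t := by
  have h1 : HasDerivAt (fun s : ℝ => 1 / s) (-(1 / t ^ 2)) t := by
    simpa [one_div] using (hasDerivAt_inv ht.ne')
  have h2 : HasDerivAt (fun s : ℝ => Real.log s) (1 / t) t := by
    simpa [one_div] using Real.hasDerivAt_log ht.ne'
  have := (h1.sub (hasDerivAt_id t)).add (h2.const_mul 2)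
  refine this.congr_deriv ?_
  field_simp
  ring

lemma hfun_strictAnti_aux {s : Set ℝ} (hs : Convex ℝ s) (hsub : s ⊆ Ioi 0)
    (hint : ∀ t ∈ interior s, t ≠ 1) :
    StrictAntiOn (fun s : ℝ => 1 / s - s + 2 * Real.log s) s := by
  apply strictAntiOn_of_deriv_neg hs
  · intro t ht
    exact ((hfun_hasDeriv (hsub ht)).continuousAt).continuousWithinAt
  · intro t ht
    have htpos : 0 < t := hsub (interior_subset ht)
    rw [(hfun_hasDeriv htpos).deriv]
    apply div_neg_of_neg_of_pos
    · have : t - 1 ≠ 0 := sub_ne_zero.mpr (hint t ht)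
      nlinarith [sq_pos_of_ne_zero this]
    · positivity

lemma hfun_pos {t : ℝ} (ht0 : 0 < t) (ht1 : t < 1) :
    0 < 1 / t - t + 2 * Real.log t := by
  have h := hfun_strictAnti_aux (s := Ioc 0 1) (convex_Ioc 0 1)
    (fun u hu => hu.1) (by rw [interior_Ioc]; exact fun u hu => ne_of_lt hu.2)
  have := h ⟨ht0, ht1.le⟩ ⟨one_pos, le_refl 1⟩ ht1
  simpa using this

lemma hfun_neg {t : ℝ} (ht1 : 1 < t) :
    1 / t - t + 2 * Real.log t < 0 := by
  have h := hfun_strictAnti_aux (s := Ici 1) (convex_Ici 1)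
    (fun u hu => mem_Ioi.mpr (lt_of_lt_of_le one_pos hu))
    (by rw [interior_Ici]; exact fun u hu => (ne_of_gt hu))
  have := h (mem_Ici.mpr le_rfl) ht1.le ht1
  simpa using this

/-- p(t) = -t^2+4t-3-2 log t -/
lemma pfun_hasDeriv {t : ℝ} (ht : 0 < t) :
    HasDerivAt (fun s : ℝ => -s ^ 2 + 4 * s - 3 - 2 * Real.log s)
      (-2 * (t - 1) ^ 2 / t) t := by
  have h2 : HasDerivAt (fun s : ℝ => Real.log s) (1 / t) t := by
    simpa [one_div] using Real.hasDerivAt_log ht.ne'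
  have hp : HasDerivAt (fun s : ℝ => -s ^ 2 + 4 * s - 3) (-(2 * t) + 4) t := by
    have := ((hasDerivAt_pow 2 t).neg.add ((hasDerivAt_id t).const_mul 4))
    simpa [mul_comm] using this.sub_const 3
  have := hp.sub (h2.const_mul 2)
  refine this.congr_deriv ?_
  field_simp
  ring

lemma pfun_strictAnti_aux {s : Set ℝ} (hs : Convex ℝ s) (hsub : s ⊆ Ioi 0)
    (hint : ∀ t ∈ interior s, t ≠ 1) :
    StrictAntiOn (fun s : ℝ => -s ^ 2 + 4 * s - 3 - 2 * Real.log s) s := by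
  apply strictAntiOn_of_deriv_neg hs
  · intro t ht
    exact ((pfun_hasDeriv (hsub ht)).continuousAt).continuousWithinAt
  · intro t ht
    have htpos : 0 < t := hsub (interior_subset ht)
    rw [(pfun_hasDeriv htpos).deriv]
    apply div_neg_of_neg_of_pos _ htpos
    have : t - 1 ≠ 0 := sub_ne_zero.mpr (hint t ht)
    nlinarith [sq_pos_of_ne_zero this]

lemma pfun_pos {t : ℝ} (ht0 : 0 < t) (ht1 : t < 1) :
    0 < -t ^ 2 + 4 * t - 3 - 2 * Real.log t := by
  have h := pfun_strictAnti_aux (s := Ioc 0 1) (convex_Ioc 0 1)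
    (fun u hu => hu.1) (by rw [interior_Ioc]; exact fun u hu => ne_of_lt hu.2)
  have := h ⟨ht0, ht1.le⟩ ⟨one_pos, le_refl 1⟩ ht1
  simp at this
  linarith

lemma pfun_neg {t : ℝ} (ht1 : 1 < t) :
    -t ^ 2 + 4 * t - 3 - 2 * Real.log t < 0 := by
  have h := pfun_strictAnti_aux (s := Ici 1) (convex_Ici 1)
    (fun u hu => mem_Ioi.mpr (lt_of_lt_of_le one_pos hu))
    (by rw [interior_Ici]; exact fun u hu => (ne_of_gt hu))
  have := h (mem_Ici.mpr le_rfl) ht1.le ht1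
  simp at this
  linarith

/-- explicit formula for g -/
noncomputable def gexp (t : ℝ) : ℝ := (t ^ 2 - 1 - 2 * Real.log t) / (t - 1) ^ 2

lemma gexp_hasDeriv {t : ℝ} (ht : 0 < t) (ht1 : t ≠ 1) :
    HasDerivAt gexp
      ((2 * (t - 1) * (1 / t - t + 2 * Real.log t)) / ((t - 1) ^ 2) ^ 2) t := by
  have hne : t - 1 ≠ 0 := sub_ne_zero.mpr ht1
  have hlog : HasDerivAt (fun s : ℝ => Real.log s) (1 / t) t := by
    simpa [one_div] using Real.hasDerivAt_log ht.ne'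
  have hN : HasDerivAt (fun s : ℝ => s ^ 2 - 1 - 2 * Real.log s) (2 * t - 2 * (1 / t)) t := by
    have := ((hasDerivAt_pow 2 t).sub_const 1).sub (hlog.const_mul 2)
    refine this.congr_deriv ?_
    ring
  have hD : HasDerivAt (fun s : ℝ => (s - 1) ^ 2) (2 * (t - 1)) t := by
    have := ((hasDerivAt_id t).sub_const 1).pow 2
    simp at this; exact this
  have := hN.div hD (pow_ne_zero 2 hne)
  refine this.congr_deriv ?_
  have htne : t ≠ 0 := ht.ne'
  field_simp
  ring

lemma gexp_deriv_neg {t : ℝ} (ht : 0 < t) (ht1 : t ≠ 1) :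
    deriv gexp t < 0 := by
  rw [(gexp_hasDeriv ht ht1).deriv]
  have hne : t - 1 ≠ 0 := sub_ne_zero.mpr ht1
  apply div_neg_of_neg_of_pos
  · rcases lt_or_gt_of_ne ht1 with h | h
    · have := hfun_pos ht h
      nlinarith
    · have := hfun_neg h
      nlinarith
  · positivity

lemma gexp_strictAnti_Ioo : StrictAntiOn gexp (Ioo (0:ℝ) 1) := by
  apply strictAntiOn_of_deriv_neg (convex_Ioo 0 1)
  · intro t ht
    exact ((gexp_hasDeriv ht.1 (ne_of_lt ht.2)).continuousAt).continuousWithinAt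
  · rw [interior_Ioo]
    intro t ht
    exact gexp_deriv_neg ht.1 (ne_of_lt ht.2)

lemma gexp_strictAnti_Ioi : StrictAntiOn gexp (Ioi (1:ℝ)) := by
  apply strictAntiOn_of_deriv_neg (convex_Ioi 1)
  · intro t ht
    exact ((gexp_hasDeriv (lt_trans one_pos ht) (ne_of_gt ht)).continuousAt).continuousWithinAt
  · rw [interior_Ioi]
    intro t ht
    exact gexp_deriv_neg (lt_trans one_pos ht) (ne_of_gt ht)

lemma gfun_eq_gexp {t : ℝ} (ht1 : t ≠ 1) : gfun t = gexp t := by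
  simp [gfun, gexp, ht1]

lemma gfun_gt_two {t : ℝ} (ht0 : 0 < t) (ht1 : t < 1) : 2 < gfun t := by
  rw [gfun_eq_gexp (ne_of_lt ht1)]
  have hne : t - 1 ≠ 0 := sub_ne_zero.mpr (ne_of_lt ht1)
  have hp := pfun_pos ht0 ht1
  rw [gexp, lt_div_iff₀ (by positivity)]
  nlinarith

lemma gfun_lt_two {t : ℝ} (ht1 : 1 < t) : gfun t < 2 := by
  rw [gfun_eq_gexp (ne_of_gt ht1)]
  have hne : t - 1 ≠ 0 := sub_ne_zero.mpr (ne_of_gt ht1)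
  have hp := pfun_neg ht1
  rw [gexp, div_lt_iff₀ (by positivity)]
  nlinarith

lemma gfun_strictAnti : StrictAntiOn gfun (Ioi (0:ℝ)) := by
  intro a ha b hb hab
  simp only [mem_Ioi] at ha hb
  rcases lt_trichotomy b 1 with hb1 | hb1 | hb1
  · rw [gfun_eq_gexp (ne_of_lt (hab.trans hb1)), gfun_eq_gexp (ne_of_lt hb1)]
    exact gexp_strictAnti_Ioo ⟨ha, hab.trans hb1⟩ ⟨hb, hb1⟩ hab
  · subst hb1
    have : gfun 1 = 2 := by simp [gfun]
    rw [this]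
    exact gfun_gt_two ha hab
  · rcases lt_trichotomy a 1 with ha1 | ha1 | ha1
    · exact lt_trans (gfun_lt_two hb1) (gfun_gt_two ha ha1)
    · subst ha1
      have : gfun 1 = 2 := by simp [gfun]
      rw [this]
      exact gfun_lt_two hb1
    · rw [gfun_eq_gexp (ne_of_gt ha1), gfun_eq_gexp (ne_of_gt hb1)]
      exact gexp_strictAnti_Ioi ha1 hb1 hab

lemma phi_eq_gfun {x y : ℝ} (hx : 0 < x) (hy : 0 < y) :
    phi x y = gfun (Real.sqrt (y / x)) := by
  by_cases hxy : x = y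
  · subst hxy
    simp [phi, gfun, div_self hx.ne']
  · have hsx : 0 < Real.sqrt x := Real.sqrt_pos.mpr hx
    have hsy : 0 < Real.sqrt y := Real.sqrt_pos.mpr hy
    have htval : Real.sqrt (y / x) = Real.sqrt y / Real.sqrt x := Real.sqrt_div hy.le x
    have hne : Real.sqrt y ≠ Real.sqrt x := by
      intro h
      exact hxy (by rw [← Real.sq_sqrt hx.le, ← Real.sq_sqrt hy.le, h])
    have ht1 : Real.sqrt (y / x) ≠ 1 := by
      rw [htval]
      intro h
      exact hne ((div_eq_one_iff_eq hsx.ne').mp h)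
    rw [phi, if_neg hxy, gfun_eq_gexp ht1, gexp, htval]
    have hlx : Real.log x = 2 * Real.log (Real.sqrt x) := by
      rw [Real.log_sqrt hx.le]; ring
    have hly : Real.log y = 2 * Real.log (Real.sqrt y) := by
      rw [Real.log_sqrt hy.le]; ring
    have hlt : Real.log (Real.sqrt y / Real.sqrt x)
        = Real.log (Real.sqrt y) - Real.log (Real.sqrt x) :=
      Real.log_div hsy.ne' hsx.ne'
    set sx := Real.sqrt x with hsxdef
    set sy := Real.sqrt y with hsydef
    have hxs : x = sx ^ 2 := (Real.sq_sqrt hx.le).symm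
    have hys : y = sy ^ 2 := (Real.sq_sqrt hy.le).symm
    rw [hlt, hlx, hly, hxs, hys]
    have h1 : sx - sy ≠ 0 := sub_ne_zero.mpr (Ne.symm hne)
    have h2 : sy / sx - 1 ≠ 0 := by
      rw [sub_ne_zero]
      intro h
      exact hne ((div_eq_one_iff_eq hsx.ne').mp h)
    rw [div_eq_div_iff (pow_ne_zero 2 h1) (pow_ne_zero 2 h2)]
    field_simp
    ring

theorem phi_strictAntiOn_snd (x : ℝ) (hx : 0 < x) :
    StrictAntiOn (fun y => phi x y) (Set.Ioi 0) := by
  intro a ha b hb hab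
  simp only [Set.mem_Ioi] at ha hb
  show phi x b < phi x a
  rw [phi_eq_gfun hx ha, phi_eq_gfun hx hb]
  apply gfun_strictAnti
  · exact Real.sqrt_pos.mpr (div_pos ha hx)
  · exact Real.sqrt_pos.mpr (div_pos hb hx)
  · exact Real.sqrt_lt_sqrt (div_nonneg ha.le hx.le) (by gcongr)
end

section
/- Define φ(x,y) = (x(log x − log y) − (x − y)) / (√x − √y)² for x, y > 0, x ≠ y, and φ(y,y) = 2. Then for each fixed y > 0, the function x ↦ φ(x,y) is strictly increasing on (0,∞). -/
open Real Set

/-- `t - 1 < t * log t` for positive `t ≠ 1`. -/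
lemma aux_mul_log {t : ℝ} (ht : 0 < t) (ht1 : t ≠ 1) : t - 1 < t * Real.log t := by
  have h := Real.log_lt_sub_one_of_pos (x := t⁻¹) (by positivity)
    (by simpa using inv_ne_one.mpr ht1)
  rw [Real.log_inv] at h
  have := mul_lt_mul_of_pos_left h ht
  rw [mul_sub, mul_inv_cancel₀ ht.ne'] at this
  nlinarith

/-- `G t = t^2 - 1 - 2 t log t` -/
noncomputable def Gfun (t : ℝ) : ℝ := t ^ 2 - 1 - 2 * t * Real.log t

lemma hasDerivAt_G {t : ℝ} (ht : 0 < t) :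
    HasDerivAt Gfun (2 * t - 2 - 2 * Real.log t) t := by
  have h1 : HasDerivAt (fun t : ℝ => t ^ 2) (2 * t) t := by
    simpa using (hasDerivAt_pow 2 t)
  have h2 : HasDerivAt (fun t : ℝ => 2 * t * Real.log t)
      (2 * Real.log t + 2) t := by
    have := ((hasDerivAt_id t).const_mul (2:ℝ)).mul (Real.hasDerivAt_log ht.ne')
    refine this.congr_deriv ?_
    field_simp
    simp only [id]
    ring
  have := (h1.sub_const 1).sub h2
  refine this.congr_deriv ?_
  ring

lemma G_deriv_pos {t : ℝ} (ht : 0 < t) (ht1 : t ≠ 1) :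
    0 < 2 * t - 2 - 2 * Real.log t := by
  have := Real.log_lt_sub_one_of_pos ht ht1
  linarith

lemma G_cont : ContinuousOn Gfun (Set.Ioi 0) := by
  intro x hx
  exact ((hasDerivAt_G hx).continuousAt).continuousWithinAt

lemma G_pos {t : ℝ} (ht : 1 < t) : 0 < Gfun t := by
  have hmono : StrictMonoOn Gfun (Set.Ici 1) := by
    apply strictMonoOn_of_deriv_pos (convex_Ici 1)
    · exact G_cont.mono (fun x hx => mem_Ioi.mpr (lt_of_lt_of_le one_pos hx))
    · intro x hx
      rw [interior_Ici] at hx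
      rw [(hasDerivAt_G (by linarith [mem_Ioi.mp hx])).deriv]
      exact G_deriv_pos (by linarith [mem_Ioi.mp hx]) (ne_of_gt hx)
  have := hmono (Set.self_mem_Ici) (Set.mem_Ici.mpr ht.le) ht
  simpa [Gfun] using this

lemma G_neg {t : ℝ} (ht : 0 < t) (ht1 : t < 1) : Gfun t < 0 := by
  have hmono : StrictMonoOn Gfun (Set.Ioc 0 1) := by
    apply strictMonoOn_of_deriv_pos (convex_Ioc 0 1)
    · exact G_cont.mono (fun x hx => hx.1)
    · intro x hx
      rw [interior_Ioc] at hx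
      rw [(hasDerivAt_G hx.1).deriv]
      exact G_deriv_pos hx.1 (ne_of_lt hx.2)
  have := hmono (Set.mem_Ioc.mpr ⟨ht, ht1.le⟩) (Set.mem_Ioc.mpr ⟨one_pos, le_refl 1⟩) ht1
  simpa [Gfun] using this

/-- `H t = 2 t^2 log t - 3 t^2 + 4 t - 1` -/
noncomputable def Hfun (t : ℝ) : ℝ := 2 * t ^ 2 * Real.log t - 3 * t ^ 2 + 4 * t - 1

lemma hasDerivAt_H {t : ℝ} (ht : 0 < t) :
    HasDerivAt Hfun (4 * t * Real.log t - 4 * t + 4) t := by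
  have h1 : HasDerivAt (fun t : ℝ => 2 * t ^ 2 * Real.log t)
      (4 * t * Real.log t + 2 * t) t := by
    have hp : HasDerivAt (fun t : ℝ => 2 * t ^ 2) (4 * t) t := by
      have := (hasDerivAt_pow 2 t).const_mul (2:ℝ)
      refine this.congr_deriv ?_
      push_cast; ring
    have := hp.mul (Real.hasDerivAt_log ht.ne')
    refine this.congr_deriv ?_
    field_simp
  have h2 : HasDerivAt (fun t : ℝ => 3 * t ^ 2) (6 * t) t := by
    have := (hasDerivAt_pow 2 t).const_mul (3:ℝ)
    refine this.congr_deriv ?_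
    push_cast; ring
  have h3 : HasDerivAt (fun t : ℝ => 4 * t) (4 : ℝ) t := by
    simpa using (hasDerivAt_id t).const_mul (4:ℝ)
  have := ((h1.sub h2).add h3).sub_const 1
  refine this.congr_deriv ?_
  ring

lemma H_deriv_pos {t : ℝ} (ht : 0 < t) (ht1 : t ≠ 1) :
    0 < 4 * t * Real.log t - 4 * t + 4 := by
  have := aux_mul_log ht ht1
  nlinarith

lemma H_cont : ContinuousOn Hfun (Set.Ioi 0) := by
  intro x hx
  exact ((hasDerivAt_H hx).continuousAt).continuousWithinAt

lemma H_pos {t : ℝ} (ht : 1 < t) : 0 < Hfun t := by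
  have hmono : StrictMonoOn Hfun (Set.Ici 1) := by
    apply strictMonoOn_of_deriv_pos (convex_Ici 1)
    · exact H_cont.mono (fun x hx => mem_Ioi.mpr (lt_of_lt_of_le one_pos hx))
    · intro x hx
      rw [interior_Ici] at hx
      rw [(hasDerivAt_H (by linarith [mem_Ioi.mp hx])).deriv]
      exact H_deriv_pos (by linarith [mem_Ioi.mp hx]) (ne_of_gt hx)
  have h := hmono (Set.self_mem_Ici) (Set.mem_Ici.mpr ht.le) ht
  have h1 : Hfun 1 = 0 := by norm_num [Hfun]
  linarith

lemma H_neg {t : ℝ} (ht : 0 < t) (ht1 : t < 1) : Hfun t < 0 := by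
  have hmono : StrictMonoOn Hfun (Set.Ioc 0 1) := by
    apply strictMonoOn_of_deriv_pos (convex_Ioc 0 1)
    · exact H_cont.mono (fun x hx => hx.1)
    · intro x hx
      rw [interior_Ioc] at hx
      rw [(hasDerivAt_H hx.1).deriv]
      exact H_deriv_pos hx.1 (ne_of_lt hx.2)
  have h := hmono (Set.mem_Ioc.mpr ⟨ht, ht1.le⟩) (Set.mem_Ioc.mpr ⟨one_pos, le_refl 1⟩) ht1
  have h1 : Hfun 1 = 0 := by norm_num [Hfun]
  linarith

/-- The one-variable version of `phi`. -/
noncomputable def ffun (t : ℝ) : ℝ :=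
  if t = 1 then 2
  else (2 * t ^ 2 * Real.log t - t ^ 2 + 1) / (t - 1) ^ 2

lemma hasDerivAt_f {t : ℝ} (ht : 0 < t) (ht1 : t ≠ 1) :
    HasDerivAt ffun (2 * Gfun t / (t - 1) ^ 3) t := by
  have hne : t - 1 ≠ 0 := sub_ne_zero.mpr ht1
  have hN : HasDerivAt (fun t : ℝ => 2 * t ^ 2 * Real.log t - t ^ 2 + 1)
      (4 * t * Real.log t) t := by
    have hp : HasDerivAt (fun t : ℝ => 2 * t ^ 2) (4 * t) t := by
      have := (hasDerivAt_pow 2 t).const_mul (2:ℝ)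
      refine this.congr_deriv ?_
      push_cast; ring
    have h1 := hp.mul (Real.hasDerivAt_log ht.ne')
    have h2 : HasDerivAt (fun t : ℝ => t ^ 2) (2 * t) t := by
      simpa using (hasDerivAt_pow 2 t)
    have := (h1.sub h2).add_const 1
    refine this.congr_deriv ?_
    field_simp
    ring
  have hD : HasDerivAt (fun t : ℝ => (t - 1) ^ 2) (2 * (t - 1)) t := by
    have := (hasDerivAt_pow 2 (t - 1)).comp t ((hasDerivAt_id t).sub_const 1)
    simp at this
    exact this
  have hDne : (t - 1) ^ 2 ≠ 0 := pow_ne_zero 2 hne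
  have hF := hN.div hD hDne
  have hEq : ffun =ᶠ[nhds t]
      (fun s => (2 * s ^ 2 * Real.log s - s ^ 2 + 1) / (s - 1) ^ 2) := by
    filter_upwards [IsOpen.mem_nhds isOpen_ne (show t ∈ {x : ℝ | x ≠ 1} from ht1)] with s hs
    simp only [ffun, if_neg hs]
  have hval : (4 * t * Real.log t * (t - 1) ^ 2
      - (2 * t ^ 2 * Real.log t - t ^ 2 + 1) * (2 * (t - 1))) / ((t - 1) ^ 2) ^ 2
      = 2 * Gfun t / (t - 1) ^ 3 := by
    rw [Gfun]
    field_simp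
    ring
  exact (hval ▸ hF).congr_of_eventuallyEq hEq

lemma f_lt_two {t : ℝ} (ht : 0 < t) (ht1 : t < 1) : ffun t < 2 := by
  rw [ffun, if_neg (ne_of_lt ht1)]
  rw [div_lt_iff₀ (pow_two_pos_of_ne_zero (sub_ne_zero.mpr (ne_of_lt ht1)))]
  have := H_neg ht ht1
  rw [Hfun] at this
  nlinarith

lemma two_lt_f {t : ℝ} (ht : 1 < t) : 2 < ffun t := by
  rw [ffun, if_neg (ne_of_gt ht)]
  rw [lt_div_iff₀ (by nlinarith : (0:ℝ) < (t - 1) ^ 2)]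
  have := H_pos ht
  rw [Hfun] at this
  nlinarith

lemma f_mono_Ioo : StrictMonoOn ffun (Set.Ioo 0 1) := by
  apply strictMonoOn_of_deriv_pos (convex_Ioo 0 1)
  · intro x hx
    exact ((hasDerivAt_f hx.1 (ne_of_lt hx.2)).continuousAt).continuousWithinAt
  · intro x hx
    rw [interior_Ioo] at hx
    rw [(hasDerivAt_f hx.1 (ne_of_lt hx.2)).deriv]
    have hG := G_neg hx.1 hx.2
    have hsq : (0:ℝ) < (x - 1) ^ 2 :=
      pow_two_pos_of_ne_zero (sub_ne_zero.mpr (ne_of_lt hx.2))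
    have h3 : (x - 1) ^ 3 < 0 := by nlinarith [mul_neg_of_pos_of_neg hsq (show x - 1 < 0 by linarith [hx.2])]
    exact div_pos_of_neg_of_neg (by linarith) h3
  done

lemma f_mono_Ioi : StrictMonoOn ffun (Set.Ioi 1) := by
  apply strictMonoOn_of_deriv_pos (convex_Ioi 1)
  · intro x hx
    have hx1 : (1:ℝ) < x := hx
    exact ((hasDerivAt_f (by linarith) (ne_of_gt hx1)).continuousAt).continuousWithinAt
  · intro x hx
    rw [interior_Ioi] at hx
    have hx1 : (1:ℝ) < x := hx
    rw [(hasDerivAt_f (by linarith) (ne_of_gt hx1)).deriv]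
    have hG := G_pos hx1
    have h3 : (0:ℝ) < (x - 1) ^ 3 := pow_pos (by linarith) 3
    exact div_pos (by linarith) h3

lemma f_mono : StrictMonoOn ffun (Set.Ioi 0) := by
  intro a ha b hb hab
  have ha0 : (0:ℝ) < a := ha
  have hb0 : (0:ℝ) < b := hb
  rcases lt_trichotomy b 1 with hb1 | hb1 | hb1
  · exact f_mono_Ioo ⟨ha0, hab.trans hb1⟩ ⟨hb0, hb1⟩ hab
  · rw [hb1, show ffun 1 = 2 from if_pos rfl]
    exact f_lt_two ha0 (hb1 ▸ hab)
  · rcases lt_trichotomy a 1 with ha1 | ha1 | ha1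
    · exact (f_lt_two ha0 ha1).trans (two_lt_f hb1)
    · rw [ha1, show ffun 1 = 2 from if_pos rfl]
      exact two_lt_f hb1
    · exact f_mono_Ioi ha1 hb1 hab

lemma phi_eq_f {x y : ℝ} (hx : 0 < x) (hy : 0 < y) :
    phi x y = ffun (Real.sqrt x / Real.sqrt y) := by
  have hsx : (0:ℝ) < Real.sqrt x := Real.sqrt_pos.mpr hx
  have hsy : (0:ℝ) < Real.sqrt y := Real.sqrt_pos.mpr hy
  by_cases hxy : x = y
  · rw [phi, if_pos hxy, hxy, div_self hsy.ne', ffun, if_pos rfl]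
  · have hsne : Real.sqrt x ≠ Real.sqrt y := fun h => hxy
      (by rw [← Real.sq_sqrt hx.le, ← Real.sq_sqrt hy.le, h])
    have hu1 : Real.sqrt x / Real.sqrt y ≠ 1 := by
      rw [Ne, div_eq_one_iff_eq hsy.ne']; exact hsne
    rw [phi, if_neg hxy, ffun, if_neg hu1]
    have hu2 : (Real.sqrt x / Real.sqrt y) ^ 2 = x / y := by
      rw [div_pow, Real.sq_sqrt hx.le, Real.sq_sqrt hy.le]
    have hlog : Real.log (Real.sqrt x / Real.sqrt y)
        = (Real.log x - Real.log y) / 2 := by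
      rw [Real.log_div hsx.ne' hsy.ne', Real.log_sqrt hx.le, Real.log_sqrt hy.le]
      ring
    rw [hu2, hlog]
    have hden : (Real.sqrt x / Real.sqrt y - 1) ^ 2
        = (Real.sqrt x - Real.sqrt y) ^ 2 / y := by
      rw [div_sub_one hsy.ne', div_pow, Real.sq_sqrt hy.le]
    rw [hden]
    have hdne : (Real.sqrt x - Real.sqrt y) ≠ 0 := sub_ne_zero.mpr hsne
    field_simp
    ring

theorem phi_strictMonoOn_fst (y : ℝ) (hy : 0 < y) :
    StrictMonoOn (fun x => phi x y) (Set.Ioi 0) := by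
  intro a ha b hb hab
  have ha0 : (0:ℝ) < a := ha
  have hb0 : (0:ℝ) < b := hb
  have hsy : (0:ℝ) < Real.sqrt y := Real.sqrt_pos.mpr hy
  simp only
  rw [phi_eq_f ha0 hy, phi_eq_f hb0 hy]
  apply f_mono
  · exact mem_Ioi.mpr (by positivity)
  · exact mem_Ioi.mpr (by positivity)
  · have hss : Real.sqrt a < Real.sqrt b := Real.sqrt_lt_sqrt ha0.le hab
    gcongr
end

section
/- Let Ω ⊂ ℝ^d be a measurable set and ρ, ρ∞ : Ω → [0,∞) be integrable with ∫ρ > 0 or ∫ρ∞ > 0. Then the relative entropy E(ρ|ρ∞) = ∫_Ω (ρ log(ρ/ρ∞) − (ρ − ρ∞)) dx satisfies E(ρ|ρ∞) ≥ (3 / (2‖ρ‖_{L¹} + 4‖ρ∞‖_{L¹})) · ‖ρ − ρ∞‖²_{L¹}. -/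
open MeasureTheory

private noncomputable def ckpG : ℝ → ℝ := fun t => (t + 1) * Real.log t - 2 * (t - 1)

private noncomputable def ckpF : ℝ → ℝ :=
  fun t => (2 * t + 4) * (t * Real.log t - t + 1) - 3 * (t - 1) ^ 2

private lemma ckpG_hasDeriv {t : ℝ} (ht : 0 < t) :
    HasDerivAt ckpG (Real.log t + t⁻¹ - 1) t := by
  have h1 : HasDerivAt (fun t : ℝ => (t + 1) * Real.log t)
      (1 * Real.log t + (t + 1) * t⁻¹) t :=
    ((hasDerivAt_id t).add_const 1).mul (Real.hasDerivAt_log ht.ne')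
  have h2 : HasDerivAt (fun t : ℝ => 2 * (t - 1)) 2 t := by
    simpa using ((hasDerivAt_id t).sub_const 1).const_mul 2
  have : HasDerivAt ckpG (1 * Real.log t + (t + 1) * t⁻¹ - 2) t := h1.sub h2
  convert this using 1
  field_simp
  ring

private lemma ckpG_deriv_nonneg {t : ℝ} (ht : 0 < t) :
    0 ≤ Real.log t + t⁻¹ - 1 := by
  have h := Real.log_le_sub_one_of_pos (inv_pos.mpr ht)
  rw [Real.log_inv] at h
  linarith

private lemma ckpG_mono : MonotoneOn ckpG (Set.Ioi (0 : ℝ)) := by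
  refine monotoneOn_of_deriv_nonneg (convex_Ioi 0)
    (fun t ht => (ckpG_hasDeriv ht).continuousAt.continuousWithinAt) ?_ ?_
  · intro t ht
    rw [interior_Ioi] at ht
    exact (ckpG_hasDeriv ht).differentiableAt.differentiableWithinAt
  · intro t ht
    rw [interior_Ioi] at ht
    rw [(ckpG_hasDeriv ht).deriv]
    exact ckpG_deriv_nonneg ht

private lemma ckpG_one : ckpG 1 = 0 := by simp [ckpG]

private lemma ckpF_hasDeriv {t : ℝ} (ht : 0 < t) :
    HasDerivAt ckpF (4 * ckpG t) t := by
  have h1 : HasDerivAt (fun t : ℝ => 2 * t + 4) 2 t := by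
    simpa using ((hasDerivAt_id t).const_mul 2).add_const 4
  have h2 : HasDerivAt (fun t : ℝ => t * Real.log t - t + 1) (Real.log t) t := by
    simpa using ((Real.hasDerivAt_mul_log ht.ne').sub (hasDerivAt_id t)).add_const 1
  have h3 : HasDerivAt (fun t : ℝ => 3 * (t - 1) ^ 2) (3 * (2 * (t - 1))) t := by
    simpa using (((hasDerivAt_id t).sub_const 1).pow 2).const_mul 3
  have : HasDerivAt ckpF (2 * (t * Real.log t - t + 1) + (2 * t + 4) * Real.log t - 3 * (2 * (t - 1))) t :=
    (h1.mul h2).sub h3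
  convert this using 1
  simp only [ckpG]
  ring

private lemma ckpF_cont : Continuous ckpF := by
  have h : Continuous fun t : ℝ => t * Real.log t := Real.continuous_mul_log
  unfold ckpF
  fun_prop

private lemma ckpF_one : ckpF 1 = 0 := by simp [ckpF]

private lemma ckpF_nonneg {t : ℝ} (ht : 0 ≤ t) : 0 ≤ ckpF t := by
  rcases le_total t 1 with h1 | h1
  · -- antitone on [0,1]
    have hanti : AntitoneOn ckpF (Set.Icc (0 : ℝ) 1) := by
      refine antitoneOn_of_deriv_nonpos (convex_Icc 0 1)
        ckpF_cont.continuousOn ?_ ?_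
      · intro t ht
        rw [interior_Icc] at ht
        exact (ckpF_hasDeriv ht.1).differentiableAt.differentiableWithinAt
      · intro t ht
        rw [interior_Icc] at ht
        rw [(ckpF_hasDeriv ht.1).deriv]
        have : ckpG t ≤ ckpG 1 :=
          ckpG_mono (Set.mem_Ioi.mpr ht.1) (Set.mem_Ioi.mpr one_pos) ht.2.le
        rw [ckpG_one] at this
        linarith
    have := hanti (Set.mem_Icc.mpr ⟨ht, h1⟩)
      (Set.mem_Icc.mpr ⟨zero_le_one, le_refl 1⟩) h1
    rw [ckpF_one] at this
    exact this
  · -- monotone on [1,∞)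
    have hmono : MonotoneOn ckpF (Set.Ici (1 : ℝ)) := by
      refine monotoneOn_of_deriv_nonneg (convex_Ici 1)
        ckpF_cont.continuousOn ?_ ?_
      · intro t ht
        rw [interior_Ici] at ht
        exact (ckpF_hasDeriv (lt_trans one_pos ht)).differentiableAt.differentiableWithinAt
      · intro t ht
        rw [interior_Ici] at ht
        rw [(ckpF_hasDeriv (lt_trans one_pos ht)).deriv]
        have : ckpG 1 ≤ ckpG t :=
          ckpG_mono (Set.mem_Ioi.mpr one_pos) (Set.mem_Ioi.mpr (lt_trans one_pos ht)) ht.le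
        rw [ckpG_one] at this
        linarith
    have := hmono (Set.mem_Ici.mpr (le_refl 1)) (Set.mem_Ici.mpr h1) h1
    rw [ckpF_one] at this
    exact this

/-- Pointwise generalized Pinsker inequality. -/
private lemma ckp_pointwise {a b : ℝ} (ha : 0 ≤ a) (hb : 0 < b) :
    3 * (a - b) ^ 2 / (2 * a + 4 * b) ≤ a * Real.log (a / b) - (a - b) := by
  have hc : 0 < 2 * a + 4 * b := by linarith
  rw [div_le_iff₀ hc]
  have hF := ckpF_nonneg (div_nonneg ha hb.le)
  have key : b ^ 2 * ckpF (a / b) =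
      (a * Real.log (a / b) - (a - b)) * (2 * a + 4 * b) - 3 * (a - b) ^ 2 := by
    simp only [ckpF]
    field_simp
    ring
  nlinarith [sq_nonneg b, mul_nonneg (sq_nonneg b) hF]

/-- Pointwise linearized inequality. -/
private lemma ckp_pointwise_lin {a b s : ℝ} (ha : 0 ≤ a) (hb : 0 < b) :
    s * |a - b| - s ^ 2 * (2 * a + 4 * b) / 12
      ≤ a * Real.log (a / b) - (a - b) := by
  have hc : 0 < 2 * a + 4 * b := by linarith
  have h1 := ckp_pointwise ha hb
  have hD : 3 * (a - b) ^ 2 / (2 * a + 4 * b) * (2 * a + 4 * b) = 3 * (a - b) ^ 2 :=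
    div_mul_cancel₀ _ hc.ne'
  have hsq := sq_nonneg (6 * |a - b| - s * (2 * a + 4 * b))
  have habs : |a - b| ^ 2 = (a - b) ^ 2 := sq_abs _
  nlinarith [h1, hD, hsq, habs, hc]

/-- Generalized Csiszár–Kullback–Pinsker inequality for nonnegative integrable
functions that need not be probability densities. -/
theorem csiszar_kullback_pinsker {d : ℕ}
    (Ω : Set (EuclideanSpace ℝ (Fin d))) (hΩ : MeasurableSet Ω)
    (ρ ρinf : EuclideanSpace ℝ (Fin d) → ℝ)
    (hρ : ∀ x ∈ Ω, 0 ≤ ρ x) (hρinf : ∀ x ∈ Ω, 0 < ρinf x)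
    (hintρ : IntegrableOn ρ Ω) (hintρinf : IntegrableOn ρinf Ω)
    (hintE : IntegrableOn
      (fun x => ρ x * Real.log (ρ x / ρinf x) - (ρ x - ρinf x)) Ω)
    (hpos : 0 < (∫ x in Ω, ρ x) ∨ 0 < (∫ x in Ω, ρinf x)) :
    (3 / (2 * (∫ x in Ω, ρ x) + 4 * (∫ x in Ω, ρinf x))) *
        (∫ x in Ω, |ρ x - ρinf x|) ^ 2
      ≤ ∫ x in Ω, (ρ x * Real.log (ρ x / ρinf x) - (ρ x - ρinf x)) := by
  set A := ∫ x in Ω, ρ x with hA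
  set B := ∫ x in Ω, ρinf x with hB
  set M := ∫ x in Ω, |ρ x - ρinf x| with hM
  have hA0 : 0 ≤ A := setIntegral_nonneg hΩ hρ
  have hB0 : 0 ≤ B := setIntegral_nonneg hΩ (fun x hx => (hρinf x hx).le)
  have hc : 0 < 2 * A + 4 * B := by rcases hpos with h | h <;> linarith
  have hM0 : 0 ≤ M := setIntegral_nonneg hΩ (fun x _ => abs_nonneg _)
  set s := 6 * M / (2 * A + 4 * B) with hs
  -- integrability of the minorant
  have hfabs : IntegrableOn (fun x => |ρ x - ρinf x|) Ω := (hintρ.sub hintρinf).abs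
  have hg : IntegrableOn (fun x => 2 * ρ x + 4 * ρinf x) Ω :=
    (hintρ.const_mul 2).add (hintρinf.const_mul 4)
  have hint1 : IntegrableOn
      (fun x => s * |ρ x - ρinf x| - s ^ 2 * (2 * ρ x + 4 * ρinf x) / 12) Ω :=
    (hfabs.const_mul s).sub ((hg.const_mul (s ^ 2)).div_const 12)
  -- pointwise bound and integral monotonicity
  have hmono : ∫ x in Ω, (s * |ρ x - ρinf x| - s ^ 2 * (2 * ρ x + 4 * ρinf x) / 12)
      ≤ ∫ x in Ω, (ρ x * Real.log (ρ x / ρinf x) - (ρ x - ρinf x)) := by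
    refine setIntegral_mono_on hint1 hintE hΩ ?_
    intro x hx
    exact ckp_pointwise_lin (hρ x hx) (hρinf x hx)
  -- compute the left integral
  have hcalc : ∫ x in Ω, (s * |ρ x - ρinf x| - s ^ 2 * (2 * ρ x + 4 * ρinf x) / 12)
      = s * M - s ^ 2 * (2 * A + 4 * B) / 12 := by
    rw [integral_sub (hfabs.const_mul s) ((hg.const_mul (s ^ 2)).div_const 12),
      integral_const_mul, integral_div, integral_const_mul,
      integral_add (hintρ.const_mul 2) (hintρinf.const_mul 4),
      integral_const_mul, integral_const_mul]
  have heq : s * M - s ^ 2 * (2 * A + 4 * B) / 12 = 3 / (2 * A + 4 * B) * M ^ 2 := by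
    rw [hs]
    field_simp
    ring
  rw [hcalc, heq] at hmono
  exact hmono
end

section
/- For all ρ, ρ∞ ∈ (0,1), the pointwise inequality −((1−ρ) − (ρ/ρ∞)(1−ρ∞))·(log(ρ/ρ∞) − log((1−ρ)/(1−ρ∞))) ≥ min{1, (1−ρ∞)/ρ∞} · (ρ log(ρ/ρ∞) + (1−ρ) log((1−ρ)/(1−ρ∞))) + 2(ρ−ρ∞)²/ρ∞ holds. -/
lemma logit_aux_mono : MonotoneOn (fun x : ℝ => Real.log x - Real.log (1 - x) - 4 * x)
    (Set.Ioo (0:ℝ) 1) := by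
  have hd : ∀ x ∈ Set.Ioo (0:ℝ) 1, HasDerivAt
      (fun x : ℝ => Real.log x - Real.log (1 - x) - 4 * x)
      (1/x + 1/(1-x) - 4) x := by
    intro x hx
    have hx0 : (0:ℝ) < x := hx.1
    have hx1 : (0:ℝ) < 1 - x := by linarith [hx.2]
    have h1 : HasDerivAt Real.log (1/x) x := by
      simpa [one_div] using Real.hasDerivAt_log hx0.ne'
    have h2' : HasDerivAt (fun x : ℝ => 1 - x) (-1) x := by
      simpa using (hasDerivAt_id x).const_sub 1
    have h2 : HasDerivAt (fun x : ℝ => Real.log (1 - x)) (1/(1-x) * (-1)) x := by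
      have := (Real.hasDerivAt_log hx1.ne').comp x h2'
      exact this.congr_deriv (by rw [one_div])
    have h3 : HasDerivAt (fun x : ℝ => 4 * x) 4 x := by
      simpa using (hasDerivAt_id x).const_mul 4
    have := (h1.sub h2).sub h3
    exact this.congr_deriv (by ring)
  apply monotoneOn_of_deriv_nonneg (convex_Ioo 0 1)
  · exact fun x hx => ((hd x hx).continuousAt).continuousWithinAt
  · intro x hx
    rw [interior_Ioo] at hx
    exact (hd x hx).differentiableAt.differentiableWithinAt
  · intro x hx
    rw [interior_Ioo] at hx
    rw [(hd x hx).deriv]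
    have hx0 : (0:ℝ) < x := hx.1
    have hx1 : (0:ℝ) < 1 - x := by linarith [hx.2]
    have key : 1/x + 1/(1-x) - 4 = (1 - 2*x)^2 / (x * (1-x)) := by
      field_simp; ring
    rw [key]; positivity

/-- Pointwise entropy dissipation inequality for the nonlinear reaction term. -/
theorem dissipation_pointwise (ρ ρinf : ℝ) (hρ : ρ ∈ Set.Ioo (0:ℝ) 1)
    (hρinf : ρinf ∈ Set.Ioo (0:ℝ) 1) :
    -(((1 - ρ) - ρ / ρinf * (1 - ρinf)) *
        (Real.log (ρ / ρinf) - Real.log ((1 - ρ) / (1 - ρinf))))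
      ≥ min 1 ((1 - ρinf) / ρinf) *
          (ρ * Real.log (ρ / ρinf) + (1 - ρ) * Real.log ((1 - ρ) / (1 - ρinf)))
        + 2 * (ρ - ρinf) ^ 2 / ρinf := by
  obtain ⟨h1, h2⟩ := hρ
  obtain ⟨h3, h4⟩ := hρinf
  have h5 : (0:ℝ) < 1 - ρ := by linarith
  have h6 : (0:ℝ) < 1 - ρinf := by linarith
  set t := ρ - ρinf with ht
  set D := Real.log (ρ / ρinf) - Real.log ((1 - ρ) / (1 - ρinf)) with hDdef
  -- step D : t * D ≥ 4 t^2
  have hg : 0 ≤ t * ((Real.log ρ - Real.log (1 - ρ) - 4 * ρ)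
      - (Real.log ρinf - Real.log (1 - ρinf) - 4 * ρinf)) := by
    rcases le_total ρ ρinf with h | h
    · have := logit_aux_mono ⟨h1, h2⟩ ⟨h3, h4⟩ h
      have ht0 : t ≤ 0 := by simp [ht]; linarith
      have : (Real.log ρ - Real.log (1 - ρ) - 4 * ρ)
          - (Real.log ρinf - Real.log (1 - ρinf) - 4 * ρinf) ≤ 0 := by
        simpa using sub_nonpos.mpr this
      nlinarith [mul_nonneg (neg_nonneg.mpr ht0) (neg_nonneg.mpr this)]
    · have := logit_aux_mono ⟨h3, h4⟩ ⟨h1, h2⟩ h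
      have ht0 : 0 ≤ t := by simp [ht]; linarith
      have : 0 ≤ (Real.log ρ - Real.log (1 - ρ) - 4 * ρ)
          - (Real.log ρinf - Real.log (1 - ρinf) - 4 * ρinf) := by
        simpa using sub_nonneg.mpr this
      exact mul_nonneg ht0 this
  have hDeq : D = (Real.log ρ - Real.log (1 - ρ) - 4 * ρ)
      - (Real.log ρinf - Real.log (1 - ρinf) - 4 * ρinf) + 4 * t := by
    rw [hDdef, Real.log_div h1.ne' h3.ne', Real.log_div h5.ne' h6.ne', ht]
    ring
  have hD : t * D ≥ 4 * t ^ 2 := by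
    rw [hDeq]; nlinarith [hg]
  -- entropy bound
  have l1 : Real.log (ρ / ρinf) ≤ ρ / ρinf - 1 :=
    Real.log_le_sub_one_of_pos (by positivity)
  have l2 : Real.log ((1 - ρ) / (1 - ρinf)) ≤ (1 - ρ) / (1 - ρinf) - 1 :=
    Real.log_le_sub_one_of_pos (by positivity)
  have hH : ρ * Real.log (ρ / ρinf) + (1 - ρ) * Real.log ((1 - ρ) / (1 - ρinf))
      ≤ t ^ 2 / (ρinf * (1 - ρinf)) := by
    have e1 : ρ * Real.log (ρ / ρinf) ≤ ρ * (ρ / ρinf - 1) :=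
      mul_le_mul_of_nonneg_left l1 h1.le
    have e2 : (1 - ρ) * Real.log ((1 - ρ) / (1 - ρinf))
        ≤ (1 - ρ) * ((1 - ρ) / (1 - ρinf) - 1) :=
      mul_le_mul_of_nonneg_left l2 h5.le
    have e3 : ρ * (ρ / ρinf - 1) + (1 - ρ) * ((1 - ρ) / (1 - ρinf) - 1)
        = t ^ 2 / (ρinf * (1 - ρinf)) := by
      rw [ht]; field_simp; ring
    linarith
  -- min bound
  have hm0 : 0 ≤ min 1 ((1 - ρinf) / ρinf) := le_min zero_le_one (by positivity)
  have hm : min 1 ((1 - ρinf) / ρinf) ≤ 2 * (1 - ρinf) := by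
    rcases le_total ρinf (1/2) with h | h
    · exact le_trans (min_le_left _ _) (by linarith)
    · refine le_trans (min_le_right _ _) ?_
      rw [div_le_iff₀ h3]
      nlinarith
  -- assemble
  have hL : -(((1 - ρ) - ρ / ρinf * (1 - ρinf)) * D) = t / ρinf * D := by
    field_simp [ht]
    ring
  rw [hL]
  have hmH : min 1 ((1 - ρinf) / ρinf)
      * (ρ * Real.log (ρ / ρinf) + (1 - ρ) * Real.log ((1 - ρ) / (1 - ρinf)))
      ≤ 2 * (1 - ρinf) * (t ^ 2 / (ρinf * (1 - ρinf))) := by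
    have hb : 0 ≤ t ^ 2 / (ρinf * (1 - ρinf)) := by positivity
    calc min 1 ((1 - ρinf) / ρinf)
        * (ρ * Real.log (ρ / ρinf) + (1 - ρ) * Real.log ((1 - ρ) / (1 - ρinf)))
        ≤ min 1 ((1 - ρinf) / ρinf) * (t ^ 2 / (ρinf * (1 - ρinf))) :=
          mul_le_mul_of_nonneg_left hH hm0
      _ ≤ 2 * (1 - ρinf) * (t ^ 2 / (ρinf * (1 - ρinf))) :=
          mul_le_mul_of_nonneg_right hm hb
    
  have e4 : 2 * (1 - ρinf) * (t ^ 2 / (ρinf * (1 - ρinf))) = 2 * t ^ 2 / ρinf := by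
    field_simp
  have e5 : t / ρinf * D = t * D / ρinf := by ring
  have e6 : t * D / ρinf ≥ 4 * t ^ 2 / ρinf := by
    exact div_le_div_of_nonneg_right hD h3.le |>.ge
  rw [e5]
  have : 2 * (ρ - ρinf) ^ 2 / ρinf = 2 * t ^ 2 / ρinf := by rw [ht]
  rw [this]
  have : 4 * t ^ 2 / ρinf = 2 * t ^ 2 / ρinf + 2 * t ^ 2 / ρinf := by ring
  linarith [e6, hmH, e4.ge, e4.le]
end
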